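/- Let H be a real Hilbert space, m ≥ 2, C_1,…,C_m nonempty closed convex subsets of H with projections P_i, C = C_1 × ⋯ × C_m and D the diagonal in H^m. Define φ : H → ℝ by φ(y) = ∑_{i=1}^m ‖y - P_i y‖². Then a point (y,…,y) ∈ D is a fixed point of P_D ∘ P_C if and only if y is a minimizer of φ over H. -/

import Mathlib

open RealInnerProductSpace

private lemma le_infDist_aux {E : Type*} [MetricSpace E] {s : Set E} (hs : s.Nonempty)
    {x : E} {d : ℝ} (h : ∀ p ∈ s, d ≤ dist x p) : d ≤ Metric.infDist x s := by
  haveI : Nonempty s := hs.to_subtype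
  rw [Metric.infDist_eq_iInf]
  exact le_ciInf fun w => h w w.2

/-- `p` is the metric projection of `x` onto `C`. -/
def IsProj {E : Type*} [NormedAddCommGroup E] (C : Set E) (x p : E) : Prop :=
  p ∈ C ∧ ∀ y ∈ C, ‖x - p‖ ≤ ‖x - y‖

theorem diagonal_fixed_point_iff_minimizer
    {H : Type*} [NormedAddCommGroup H] [InnerProductSpace ℝ H] [CompleteSpace H]
    (m : ℕ) (hm : 2 ≤ m) (C : Fin m → Set H)
    (hne : ∀ i, (C i).Nonempty) (hcl : ∀ i, IsClosed (C i)) (hconv : ∀ i, Convex ℝ (C i))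
    (φ : H → ℝ) (hφ : ∀ v : H, φ v = ∑ i : Fin m, (Metric.infDist v (C i)) ^ 2)
    (y : H) (c : Fin m → H) (hc : ∀ i, IsProj (C i) y (c i)) :
    (m : ℝ)⁻¹ • ∑ i : Fin m, c i = y ↔ ∀ w : H, φ y ≤ φ w := by
  have hm0 : (m : ℝ) ≠ 0 := by
    have : 0 < m := by omega
    exact_mod_cast this.ne'
  -- A: infDist y (C i) = ‖y - c i‖
  have hA : ∀ i, Metric.infDist y (C i) = ‖y - c i‖ := by
    intro i
    refine le_antisymm ?_ ?_
    · simpa [dist_eq_norm] using Metric.infDist_le_dist_of_mem (hc i).1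
    · refine le_infDist_aux (hne i) fun p hp => ?_
      simpa [dist_eq_norm] using (hc i).2 p hp
  -- B: variational inequality for the projection
  have hB : ∀ i, ∀ p ∈ C i, ⟪y - c i, p - c i⟫ ≤ 0 := by
    intro i
    have hinf : ‖y - c i‖ = ⨅ w : C i, ‖y - w‖ := by
      haveI : Nonempty (C i) := (hne i).to_subtype
      refine le_antisymm ?_ ?_
      · exact le_ciInf fun w => (hc i).2 w w.2
      · have hbdd : BddBelow (Set.range fun w : C i => ‖y - (w : H)‖) := by
          refine ⟨0, ?_⟩
          rintro r ⟨w, rfl⟩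
          exact norm_nonneg _
        exact ciInf_le hbdd ⟨c i, (hc i).1⟩
    exact (norm_eq_iInf_iff_real_inner_le_zero (hconv i) (hc i).1).1 hinf
  -- C: subgradient inequality
  have hC : ∀ i, ∀ v : H,
      ‖y - c i‖ ^ 2 + 2 * ⟪y - c i, v - y⟫ ≤ (Metric.infDist v (C i)) ^ 2 := by
    intro i v
    set u := y - c i with hu
    by_cases hu0 : u = 0
    · rw [hu0]
      simpa using sq_nonneg (Metric.infDist v (C i))
    · have hun : 0 < ‖u‖ := norm_pos_iff.2 hu0
      set t := ‖u‖ ^ 2 + ⟪u, v - y⟫ with ht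
      have hgoal : ‖u‖ ^ 2 + 2 * ⟪u, v - y⟫ = 2 * t - ‖u‖ ^ 2 := by rw [ht]; ring
      rw [hgoal]
      by_cases htp : t ≤ 0
      · have h0 : 2 * t - ‖u‖ ^ 2 ≤ 0 := by nlinarith [sq_nonneg ‖u‖]
        exact h0.trans (by positivity)
      · push_neg at htp
        have hk : ∀ p ∈ C i, t / ‖u‖ ≤ dist v p := by
          intro p hp
          have h1 : t ≤ ⟪v - p, u⟫ := by
            have hdecomp : v - p = (v - y) + u - (p - c i) := by
              rw [hu]; abel
            rw [hdecomp, inner_sub_left, inner_add_left]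
            have h2 : ⟪p - c i, u⟫ ≤ 0 := by
              rw [real_inner_comm]; exact hB i p hp
            have h3 : ⟪u, u⟫ = ‖u‖ ^ 2 := real_inner_self_eq_norm_sq u
            have h4 : ⟪v - y, u⟫ = ⟪u, v - y⟫ := real_inner_comm _ _
            rw [ht]; linarith
          have h5 : ⟪v - p, u⟫ ≤ ‖v - p‖ * ‖u‖ := real_inner_le_norm _ _
          rw [div_le_iff₀ hun, dist_eq_norm]
          linarith
        have hk2 : t / ‖u‖ ≤ Metric.infDist v (C i) :=
          le_infDist_aux (hne i) hk
        have hd0 : 0 ≤ Metric.infDist v (C i) := Metric.infDist_nonneg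
        have hdu : t ≤ Metric.infDist v (C i) * ‖u‖ := by
          rw [div_le_iff₀ hun] at hk2; exact hk2
        have hA1 : (2 * t - ‖u‖ ^ 2) * ‖u‖ ^ 2 ≤ t ^ 2 := by
          nlinarith [sq_nonneg (t - ‖u‖ ^ 2)]
        have hA2 : t * t ≤ (Metric.infDist v (C i) * ‖u‖) * (Metric.infDist v (C i) * ‖u‖) :=
          mul_self_le_mul_self htp.le hdu
        nlinarith [hA1, hA2, mul_pos hun hun]
  have hφy : φ y = ∑ i : Fin m, ‖y - c i‖ ^ 2 := by
    rw [hφ]; exact Finset.sum_congr rfl fun i _ => by rw [hA]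
  set u := ∑ i : Fin m, (y - c i) with hudef
  have husum : u = (m : ℝ) • y - ∑ i : Fin m, c i := by
    rw [hudef, Finset.sum_sub_distrib, Finset.sum_const, Finset.card_univ, Fintype.card_fin,
      Nat.cast_smul_eq_nsmul ℝ]
  constructor
  · intro hfix w
    have hu0 : u = 0 := by
      have hs : ∑ i : Fin m, c i = (m : ℝ) • y := by
        have := congrArg (fun z => (m : ℝ) • z) hfix
        simpa [smul_smul, mul_inv_cancel₀ hm0] using this
      rw [husum, hs, sub_self]
    calc φ y = ∑ i : Fin m, (‖y - c i‖ ^ 2 + 2 * ⟪y - c i, w - y⟫) := by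
            rw [hφy, Finset.sum_add_distrib, ← Finset.mul_sum, ← sum_inner, ← hudef, hu0]
            simp
      _ ≤ ∑ i : Fin m, (Metric.infDist w (C i)) ^ 2 :=
            Finset.sum_le_sum fun i _ => hC i w
      _ = φ w := (hφ w).symm
  · intro hmin
    have hu0 : u = 0 := by
      set s := (m : ℝ)⁻¹ • u with hs
      have h1 := hmin (y - s)
      have h2 : φ (y - s) = ∑ i : Fin m, (Metric.infDist (y - s) (C i)) ^ 2 := hφ _
      have h3 : ∀ i : Fin m, (Metric.infDist (y - s) (C i)) ^ 2 ≤ ‖(y - c i) - s‖ ^ 2 := by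
        intro i
        have hle : Metric.infDist (y - s) (C i) ≤ ‖(y - c i) - s‖ := by
          have h := Metric.infDist_le_dist_of_mem (x := y - s) (hc i).1
          rw [dist_eq_norm] at h
          have heq : y - s - c i = (y - c i) - s := by abel
          rwa [heq] at h
        exact pow_le_pow_left₀ Metric.infDist_nonneg hle 2
      have h4 : ∀ i : Fin m, ‖(y - c i) - s‖ ^ 2
          = ‖y - c i‖ ^ 2 - 2 * ⟪y - c i, s⟫ + ‖s‖ ^ 2 := fun i =>
        norm_sub_sq_real _ _
      have h5 : φ (y - s) ≤ φ y - 2 * ⟪u, s⟫ + (m : ℝ) * ‖s‖ ^ 2 := by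
        rw [h2, hφy]
        calc ∑ i : Fin m, (Metric.infDist (y - s) (C i)) ^ 2
            ≤ ∑ i : Fin m, ‖(y - c i) - s‖ ^ 2 := Finset.sum_le_sum fun i _ => h3 i
          _ = ∑ i : Fin m, (‖y - c i‖ ^ 2 - 2 * ⟪y - c i, s⟫ + ‖s‖ ^ 2) :=
              Finset.sum_congr rfl fun i _ => h4 i
          _ = (∑ i : Fin m, ‖y - c i‖ ^ 2) - 2 * ⟪u, s⟫ + (m : ℝ) * ‖s‖ ^ 2 := by
              rw [Finset.sum_add_distrib, Finset.sum_sub_distrib, ← Finset.mul_sum,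
                ← sum_inner, ← hudef, Finset.sum_const, Finset.card_univ, Fintype.card_fin,
                nsmul_eq_mul]
      have hus : ⟪u, s⟫ = (m : ℝ)⁻¹ * ‖u‖ ^ 2 := by
        rw [hs, real_inner_smul_right, real_inner_self_eq_norm_sq]
      have hss : ‖s‖ ^ 2 = (m : ℝ)⁻¹ ^ 2 * ‖u‖ ^ 2 := by
        rw [hs, norm_smul, mul_pow]
        congr 1
        rw [Real.norm_eq_abs, sq_abs]
      have hmpos : 0 < (m : ℝ) := by positivity
      have h6 : φ (y - s) ≤ φ y - (m : ℝ)⁻¹ * ‖u‖ ^ 2 := by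
        rw [hus, hss] at h5
        have hcalc : (m : ℝ) * ((m : ℝ)⁻¹ ^ 2 * ‖u‖ ^ 2) = (m : ℝ)⁻¹ * ‖u‖ ^ 2 := by
          field_simp
        linarith [h5, hcalc.le, hcalc.ge]
      have h7 : ‖u‖ ^ 2 ≤ 0 := by
        have h8 := h1.trans h6
        nlinarith [inv_pos.2 hmpos]
      have h9 : ‖u‖ = 0 := by nlinarith [norm_nonneg u]
      exact norm_eq_zero.1 h9
    have hs : ∑ i : Fin m, c i = (m : ℝ) • y := by
      have h := husum.symm.trans hu0
      rw [sub_eq_zero] at h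
      exact h.symm
    rw [hs, inv_smul_smul₀ hm0]
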